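/- Let 0 ≤ s < e be integers and {ω_t} a real sequence on (s, e] that is piecewise constant with exactly two change-points η_r < η_{r+1} in (s, e): ω takes value a on (s, η_r], value c on (η_r, η_{r+1}], and value g on (η_{r+1}, e]. Then max_{s<t<e} |ω̃_t^{(s,e]}| ≤ sqrt(e − η_{r+1}) |g − c| + sqrt(η_r − s) |a − c|, where ω̃_t^{(s,e]} is the CUSUM statistic. -/

import Mathlib

/-- The CUSUM statistic of a real sequence `ω` over the integer interval `(s, e]`. -/
noncomputable def cusum (s e : ℕ) (ω : ℕ → ℝ) (t : ℕ) : ℝ :=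
  Real.sqrt (((e : ℝ) - t) / (((e : ℝ) - s) * ((t : ℝ) - s))) * ∑ l ∈ Finset.Ioc s t, ω l -
    Real.sqrt (((t : ℝ) - s) / (((e : ℝ) - s) * ((e : ℝ) - t))) * ∑ l ∈ Finset.Ioc t e, ω l

private lemma sum_const_Ioc' (m n : ℕ) (hmn : m ≤ n) (v : ℝ) (ω : ℕ → ℝ)
    (h : ∀ l, m < l → l ≤ n → ω l = v) :
    ∑ l ∈ Finset.Ioc m n, ω l = ((n : ℝ) - m) * v := by
  rw [Finset.sum_congr rfl (fun l hl => by
    rw [h l (Finset.mem_Ioc.mp hl).1 (Finset.mem_Ioc.mp hl).2]),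
    Finset.sum_const, Nat.card_Ioc, nsmul_eq_mul, Nat.cast_sub hmn]

private lemma mul3_le' (x x' y y' z z' : ℝ) (hx : 0 ≤ x) (hy : 0 ≤ y) (hz : 0 ≤ z)
    (h1 : x ≤ x') (h2 : y ≤ y') (h3 : z ≤ z') : x * y * z ≤ x' * y' * z' := by
  have hxy : x * y ≤ x' * y' := mul_le_mul h1 h2 hy (le_trans hx h1)
  exact mul_le_mul hxy h3 hz (mul_nonneg (le_trans hx h1) (le_trans hy h2))

private lemma sqrt_mul_le' (x y z w p : ℝ) (hy : 0 < y) (hz : 0 < z) (hw : 0 ≤ w)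
    (hx : 0 ≤ x) (h : x * w ^ 2 ≤ y * z * p) :
    Real.sqrt (x / (y * z)) * w ≤ Real.sqrt p := by
  have hq : (0:ℝ) ≤ x / (y * z) := div_nonneg hx (by positivity)
  have h1 : Real.sqrt (x / (y * z)) * w = Real.sqrt (x / (y * z) * w ^ 2) := by
    rw [Real.sqrt_mul hq, Real.sqrt_sq hw]
  rw [h1]
  apply Real.sqrt_le_sqrt
  rw [div_mul_eq_mul_div, div_le_iff₀ (by positivity)]
  nlinarith

private lemma key_eq' (S T E : ℝ) (h1 : S < T) (h2 : T < E) :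
    Real.sqrt ((E - T) / ((E - S) * (T - S))) * (T - S) =
      Real.sqrt ((T - S) / ((E - S) * (E - T))) * (E - T) := by
  have hne1 : E - S ≠ 0 := by intro h; linarith [h1.trans h2]
  have hne2 : T - S ≠ 0 := by intro h; linarith
  have hne3 : E - T ≠ 0 := by intro h; linarith
  have e1 : Real.sqrt ((E - T) / ((E - S) * (T - S))) * (T - S)
      = Real.sqrt ((E - T) / ((E - S) * (T - S)) * (T - S) ^ 2) := by
    rw [Real.sqrt_mul (div_nonneg (by linarith)
      (mul_nonneg (by linarith [h1.trans h2]) (by linarith))), Real.sqrt_sq (by linarith)]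
  have e2 : Real.sqrt ((T - S) / ((E - S) * (E - T))) * (E - T)
      = Real.sqrt ((T - S) / ((E - S) * (E - T)) * (E - T) ^ 2) := by
    rw [Real.sqrt_mul (div_nonneg (by linarith)
      (mul_nonneg (by linarith [h1.trans h2]) (by linarith))), Real.sqrt_sq (by linarith)]
  rw [e1, e2]
  congr 1
  field_simp

private lemma combine' (X Y ac gc P Q : ℝ) (hX : |X| ≤ Real.sqrt P) (hY : |Y| ≤ Real.sqrt Q) :
    |X * ac + Y * gc| ≤ Real.sqrt Q * |gc| + Real.sqrt P * |ac| := by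
  have h1 : |X| * |ac| ≤ Real.sqrt P * |ac| :=
    mul_le_mul_of_nonneg_right hX (abs_nonneg ac)
  have h2 : |Y| * |gc| ≤ Real.sqrt Q * |gc| :=
    mul_le_mul_of_nonneg_right hY (abs_nonneg gc)
  calc |X * ac + Y * gc| ≤ |X * ac| + |Y * gc| := abs_add_le _ _
    _ = |X| * |ac| + |Y| * |gc| := by rw [abs_mul, abs_mul]
    _ ≤ _ := by linarith

set_option maxHeartbeats 1000000 in
/-- If `ω` is piecewise constant on `(s, e]` with exactly two change-points
`η₁ < η₂` (value `a` on `(s, η₁]`, `c` on `(η₁, η₂]`, `g` on `(η₂, e]`), then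
`max_{s<t<e} |cusum t| ≤ sqrt(e − η₂)·|g − c| + sqrt(η₁ − s)·|a − c|`. -/
theorem stmt9 (s e η₁ η₂ : ℕ) (h1 : s < η₁) (h2 : η₁ < η₂) (h3 : η₂ < e)
    (a c g : ℝ) (ω : ℕ → ℝ)
    (hωa : ∀ t, s < t → t ≤ η₁ → ω t = a)
    (hωc : ∀ t, η₁ < t → t ≤ η₂ → ω t = c)
    (hωg : ∀ t, η₂ < t → t ≤ e → ω t = g) :
    ∀ t, s < t → t < e →
      |cusum s e ω t| ≤
        Real.sqrt ((e : ℝ) - η₂) * |g - c| + Real.sqrt ((η₁ : ℝ) - s) * |a - c| := by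
  intro t hst hte
  have hS1 : (s : ℝ) < η₁ := by exact_mod_cast h1
  have hH12 : (η₁ : ℝ) < η₂ := by exact_mod_cast h2
  have hH2E : (η₂ : ℝ) < e := by exact_mod_cast h3
  have hST : (s : ℝ) < t := by exact_mod_cast hst
  have hTE : (t : ℝ) < e := by exact_mod_cast hte
  have hSE : (s : ℝ) < e := lt_trans hST hTE
  set A : ℝ := Real.sqrt (((e : ℝ) - t) / (((e : ℝ) - s) * ((t : ℝ) - s))) with hA
  set B : ℝ := Real.sqrt (((t : ℝ) - s) / (((e : ℝ) - s) * ((e : ℝ) - t))) with hB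
  have keyAB : A * ((t : ℝ) - s) = B * ((e : ℝ) - t) := key_eq' _ _ _ hST hTE
  have hAnn : (0:ℝ) ≤ A := Real.sqrt_nonneg _
  have hBnn : (0:ℝ) ≤ B := Real.sqrt_nonneg _
  rcases le_or_gt t η₁ with hcase | hcase
  · -- case t ≤ η₁
    have hTH1 : (t : ℝ) ≤ η₁ := by exact_mod_cast hcase
    have hs1 : ∑ l ∈ Finset.Ioc s t, ω l = ((t : ℝ) - s) * a :=
      sum_const_Ioc' s t hst.le a ω (fun l hl1 hl2 => hωa l hl1 (hl2.trans hcase))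
    have e1 : (∑ l ∈ Finset.Ioc t η₁, ω l) + ∑ l ∈ Finset.Ioc η₁ e, ω l
        = ∑ l ∈ Finset.Ioc t e, ω l :=
      Finset.sum_Ioc_consecutive ω hcase (le_of_lt (h2.trans h3))
    have e2 : (∑ l ∈ Finset.Ioc η₁ η₂, ω l) + ∑ l ∈ Finset.Ioc η₂ e, ω l
        = ∑ l ∈ Finset.Ioc η₁ e, ω l :=
      Finset.sum_Ioc_consecutive ω h2.le h3.le
    have v1 : ∑ l ∈ Finset.Ioc t η₁, ω l = ((η₁ : ℝ) - t) * a :=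
      sum_const_Ioc' t η₁ hcase a ω (fun l hl1 hl2 => hωa l (lt_trans hst hl1) hl2)
    have v2 : ∑ l ∈ Finset.Ioc η₁ η₂, ω l = ((η₂ : ℝ) - η₁) * c :=
      sum_const_Ioc' η₁ η₂ h2.le c ω (fun l hl1 hl2 => hωc l hl1 hl2)
    have v3 : ∑ l ∈ Finset.Ioc η₂ e, ω l = ((e : ℝ) - η₂) * g :=
      sum_const_Ioc' η₂ e h3.le g ω (fun l hl1 hl2 => hωg l hl1 hl2)
    have hs2 : ∑ l ∈ Finset.Ioc t e, ω l
        = ((η₁ : ℝ) - t) * a + (((η₂ : ℝ) - η₁) * c + ((e : ℝ) - η₂) * g) := by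
      rw [← e1, ← e2, v1, v2, v3]
    have hEq : cusum s e ω t =
        (A * ((t : ℝ) - s) - B * ((η₁ : ℝ) - t)) * (a - c)
          + (-(B * ((e : ℝ) - η₂))) * (g - c) := by
      rw [cusum, hs1, hs2, ← hA, ← hB]
      linear_combination c * keyAB
    rw [hEq]
    apply combine'
    · have b1 : A * ((t : ℝ) - s) ≤ Real.sqrt ((η₁ : ℝ) - s) := by
        rw [hA]
        refine sqrt_mul_le' _ _ _ _ _ (by linarith) (by linarith) (by linarith) (by linarith) ?_
        linarith [mul3_le' ((e:ℝ) - t) ((e:ℝ) - s) ((t:ℝ) - s) ((t:ℝ) - s)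
           ((t:ℝ) - s) ((η₁:ℝ) - s) (by linarith) (by linarith) (by linarith)
           (by linarith) le_rfl (by linarith)]
      have b2 : B * ((η₁ : ℝ) - t) ≤ Real.sqrt ((η₁ : ℝ) - s) := by
        rw [hB]
        refine sqrt_mul_le' _ _ _ _ _ (by linarith) (by linarith) (by linarith) (by linarith) ?_
        linarith [mul3_le' ((t:ℝ) - s) ((e:ℝ) - s) ((η₁:ℝ) - t) ((e:ℝ) - t)
           ((η₁:ℝ) - t) ((η₁:ℝ) - s) (by linarith) (by linarith) (by linarith)
           (by linarith) (by linarith) (by linarith)]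
      have n1 : 0 ≤ A * ((t : ℝ) - s) := mul_nonneg hAnn (by linarith)
      have n2 : 0 ≤ B * ((η₁ : ℝ) - t) := mul_nonneg hBnn (by linarith)
      rw [abs_le]
      constructor <;> linarith
    · have b3 : B * ((e : ℝ) - η₂) ≤ Real.sqrt ((e : ℝ) - η₂) := by
        rw [hB]
        refine sqrt_mul_le' _ _ _ _ _ (by linarith) (by linarith) (by linarith) (by linarith) ?_
        linarith [mul3_le' ((t:ℝ) - s) ((e:ℝ) - s) ((e:ℝ) - η₂) ((e:ℝ) - t)
           ((e:ℝ) - η₂) ((e:ℝ) - η₂) (by linarith) (by linarith) (by linarith)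
           (by linarith) (by linarith) le_rfl]
      have n3 : 0 ≤ B * ((e : ℝ) - η₂) := mul_nonneg hBnn (by linarith)
      rw [abs_neg, abs_le]
      constructor <;> linarith
  · rcases le_or_gt t η₂ with hcase2 | hcase2
    · -- case η₁ < t ≤ η₂
      have hH1T : (η₁ : ℝ) < t := by exact_mod_cast hcase
      have hTH2 : (t : ℝ) ≤ η₂ := by exact_mod_cast hcase2
      have e1 : (∑ l ∈ Finset.Ioc s η₁, ω l) + ∑ l ∈ Finset.Ioc η₁ t, ω l
          = ∑ l ∈ Finset.Ioc s t, ω l :=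
        Finset.sum_Ioc_consecutive ω h1.le hcase.le
      have e2 : (∑ l ∈ Finset.Ioc t η₂, ω l) + ∑ l ∈ Finset.Ioc η₂ e, ω l
          = ∑ l ∈ Finset.Ioc t e, ω l :=
        Finset.sum_Ioc_consecutive ω hcase2 h3.le
      have v1 : ∑ l ∈ Finset.Ioc s η₁, ω l = ((η₁ : ℝ) - s) * a :=
        sum_const_Ioc' s η₁ h1.le a ω (fun l hl1 hl2 => hωa l hl1 hl2)
      have v2 : ∑ l ∈ Finset.Ioc η₁ t, ω l = ((t : ℝ) - η₁) * c :=
        sum_const_Ioc' η₁ t hcase.le c ω (fun l hl1 hl2 => hωc l hl1 (hl2.trans hcase2))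
      have v3 : ∑ l ∈ Finset.Ioc t η₂, ω l = ((η₂ : ℝ) - t) * c :=
        sum_const_Ioc' t η₂ hcase2 c ω (fun l hl1 hl2 => hωc l (lt_trans hcase hl1) hl2)
      have v4 : ∑ l ∈ Finset.Ioc η₂ e, ω l = ((e : ℝ) - η₂) * g :=
        sum_const_Ioc' η₂ e h3.le g ω (fun l hl1 hl2 => hωg l hl1 hl2)
      have hs1 : ∑ l ∈ Finset.Ioc s t, ω l = ((η₁ : ℝ) - s) * a + ((t : ℝ) - η₁) * c := by
        rw [← e1, v1, v2]
      have hs2 : ∑ l ∈ Finset.Ioc t e, ω l = ((η₂ : ℝ) - t) * c + ((e : ℝ) - η₂) * g := by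
        rw [← e2, v3, v4]
      have hEq : cusum s e ω t =
          (A * ((η₁ : ℝ) - s)) * (a - c) + (-(B * ((e : ℝ) - η₂))) * (g - c) := by
        rw [cusum, hs1, hs2, ← hA, ← hB]
        linear_combination c * keyAB
      rw [hEq]
      apply combine'
      · have b1 : A * ((η₁ : ℝ) - s) ≤ Real.sqrt ((η₁ : ℝ) - s) := by
          rw [hA]
          refine sqrt_mul_le' _ _ _ _ _ (by linarith) (by linarith) (by linarith) (by linarith) ?_
          linarith [mul3_le' ((e:ℝ) - t) ((e:ℝ) - s) ((η₁:ℝ) - s) ((t:ℝ) - s)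
             ((η₁:ℝ) - s) ((η₁:ℝ) - s) (by linarith) (by linarith) (by linarith)
             (by linarith) (by linarith) le_rfl]
        have n1 : 0 ≤ A * ((η₁ : ℝ) - s) := mul_nonneg hAnn (by linarith)
        rw [abs_le]
        constructor <;> linarith
      · have b3 : B * ((e : ℝ) - η₂) ≤ Real.sqrt ((e : ℝ) - η₂) := by
          rw [hB]
          refine sqrt_mul_le' _ _ _ _ _ (by linarith) (by linarith) (by linarith) (by linarith) ?_
          linarith [mul3_le' ((t:ℝ) - s) ((e:ℝ) - s) ((e:ℝ) - η₂) ((e:ℝ) - t)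
             ((e:ℝ) - η₂) ((e:ℝ) - η₂) (by linarith) (by linarith) (by linarith)
             (by linarith) (by linarith) le_rfl]
        have n3 : 0 ≤ B * ((e : ℝ) - η₂) := mul_nonneg hBnn (by linarith)
        rw [abs_neg, abs_le]
        constructor <;> linarith
    · -- case η₂ < t
      have hH2T : (η₂ : ℝ) < t := by exact_mod_cast hcase2
      have hH1T : (η₁ : ℝ) < t := by exact_mod_cast hcase
      have e1 : (∑ l ∈ Finset.Ioc s η₁, ω l) + ∑ l ∈ Finset.Ioc η₁ t, ω l
          = ∑ l ∈ Finset.Ioc s t, ω l :=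
        Finset.sum_Ioc_consecutive ω h1.le hcase.le
      have e2 : (∑ l ∈ Finset.Ioc η₁ η₂, ω l) + ∑ l ∈ Finset.Ioc η₂ t, ω l
          = ∑ l ∈ Finset.Ioc η₁ t, ω l :=
        Finset.sum_Ioc_consecutive ω h2.le hcase2.le
      have v1 : ∑ l ∈ Finset.Ioc s η₁, ω l = ((η₁ : ℝ) - s) * a :=
        sum_const_Ioc' s η₁ h1.le a ω (fun l hl1 hl2 => hωa l hl1 hl2)
      have v2 : ∑ l ∈ Finset.Ioc η₁ η₂, ω l = ((η₂ : ℝ) - η₁) * c :=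
        sum_const_Ioc' η₁ η₂ h2.le c ω (fun l hl1 hl2 => hωc l hl1 hl2)
      have v3 : ∑ l ∈ Finset.Ioc η₂ t, ω l = ((t : ℝ) - η₂) * g :=
        sum_const_Ioc' η₂ t hcase2.le g ω (fun l hl1 hl2 => hωg l hl1 (hl2.trans hte.le))
      have v4 : ∑ l ∈ Finset.Ioc t e, ω l = ((e : ℝ) - t) * g :=
        sum_const_Ioc' t e hte.le g ω (fun l hl1 hl2 => hωg l (lt_trans hcase2 hl1) hl2)
      have hs1 : ∑ l ∈ Finset.Ioc s t, ω l
          = ((η₁ : ℝ) - s) * a + (((η₂ : ℝ) - η₁) * c + ((t : ℝ) - η₂) * g) := by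
        rw [← e1, ← e2, v1, v2, v3]
      have hEq : cusum s e ω t =
          (A * ((η₁ : ℝ) - s)) * (a - c)
            + (A * ((t : ℝ) - η₂) - B * ((e : ℝ) - t)) * (g - c) := by
        rw [cusum, hs1, v4, ← hA, ← hB]
        linear_combination c * keyAB
      rw [hEq]
      apply combine'
      · have b1 : A * ((η₁ : ℝ) - s) ≤ Real.sqrt ((η₁ : ℝ) - s) := by
          rw [hA]
          refine sqrt_mul_le' _ _ _ _ _ (by linarith) (by linarith) (by linarith) (by linarith) ?_
          linarith [mul3_le' ((e:ℝ) - t) ((e:ℝ) - s) ((η₁:ℝ) - s) ((t:ℝ) - s)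
             ((η₁:ℝ) - s) ((η₁:ℝ) - s) (by linarith) (by linarith) (by linarith)
             (by linarith) (by linarith) le_rfl]
        have n1 : 0 ≤ A * ((η₁ : ℝ) - s) := mul_nonneg hAnn (by linarith)
        rw [abs_le]
        constructor <;> linarith
      · have b2 : A * ((t : ℝ) - η₂) ≤ Real.sqrt ((e : ℝ) - η₂) := by
          rw [hA]
          refine sqrt_mul_le' _ _ _ _ _ (by linarith) (by linarith) (by linarith) (by linarith) ?_
          linarith [mul3_le' ((e:ℝ) - t) ((e:ℝ) - s) ((t:ℝ) - η₂) ((t:ℝ) - s)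
             ((t:ℝ) - η₂) ((e:ℝ) - η₂) (by linarith) (by linarith) (by linarith)
             (by linarith) (by linarith) (by linarith)]
        have b3 : B * ((e : ℝ) - t) ≤ Real.sqrt ((e : ℝ) - η₂) := by
          rw [hB]
          refine sqrt_mul_le' _ _ _ _ _ (by linarith) (by linarith) (by linarith) (by linarith) ?_
          linarith [mul3_le' ((t:ℝ) - s) ((e:ℝ) - s) ((e:ℝ) - t) ((e:ℝ) - t)
             ((e:ℝ) - t) ((e:ℝ) - η₂) (by linarith) (by linarith) (by linarith)
             (by linarith) le_rfl (by linarith)]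
        have n2 : 0 ≤ A * ((t : ℝ) - η₂) := mul_nonneg hAnn (by linarith)
        have n3 : 0 ≤ B * ((e : ℝ) - t) := mul_nonneg hBnn (by linarith)
        rw [abs_le]
        constructor <;> linarith
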